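/- For every positive integer n, every primitive n-th root of unity ζ_n in ℂ, and every positive integer r, one has z_n({2}^r; ζ_n) = ((-1)^r / (n·(r+1))) · binom(n+r, 2r+1) · (1-ζ_n)^{2r}. -/

import Mathlib

open Finset Polynomial

/-- The set of tuples `(m_1,...,m_r)` with `n > m_1 > m_2 > ... > m_r > 0`. -/
def msets (n r : ℕ) : Finset (Fin r → Fin n) :=
  Finset.univ.filter fun m =>
    (∀ i j : Fin r, i < j → m j < m i) ∧ ∀ i, 0 < (m i : ℕ)

/-- The set of tuples `(m_1,...,m_r)` with `n > m_1 ≥ m_2 ≥ ... ≥ m_r > 0`. -/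
def msetsStar (n r : ℕ) : Finset (Fin r → Fin n) :=
  Finset.univ.filter fun m =>
    (∀ i j : Fin r, i ≤ j → m j ≤ m i) ∧ ∀ i, 0 < (m i : ℕ)

/-- The finite multiple harmonic q-series
`z_n(k_1,…,k_r; q) = Σ_{n > m_1 > … > m_r > 0} Π_i q^{(k_i-1)m_i}/[m_i]_q^{k_i}`,
where `[m]_q = (1-q^m)/(1-q)`. -/
noncomputable def z (n : ℕ) {r : ℕ} (k : Fin r → ℕ) (q : ℂ) : ℂ :=
  ∑ m ∈ msets n r,
    ∏ i, q ^ ((k i - 1) * (m i : ℕ)) / ((1 - q ^ (m i : ℕ)) / (1 - q)) ^ (k i)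

/-- The star version `z*_n(k; q)`, summed over `n > m_1 ≥ … ≥ m_r > 0`. -/
noncomputable def zstar (n : ℕ) {r : ℕ} (k : Fin r → ℕ) (q : ℂ) : ℂ :=
  ∑ m ∈ msetsStar n r,
    ∏ i, q ^ ((k i - 1) * (m i : ℕ)) / ((1 - q ^ (m i : ℕ)) / (1 - q)) ^ (k i)

/-- The modified value `z̄_n(k;q) = (1-q)^{-wt(k)} z_n(k;q)`. -/
noncomputable def zbar (n : ℕ) {r : ℕ} (k : Fin r → ℕ) (q : ℂ) : ℂ :=
  (1 - q)⁻¹ ^ (∑ i, k i) * z n k q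

/-- The modified star value `z̄*_n(k;q) = (1-q)^{-wt(k)} z*_n(k;q)`. -/
noncomputable def zstarbar (n : ℕ) {r : ℕ} (k : Fin r → ℕ) (q : ℂ) : ℂ :=
  (1 - q)⁻¹ ^ (∑ i, k i) * zstar n k q

/-- `I(k,r,s)`: the set of indices (tuples of positive integers) of weight `k`,
depth `r` and height `s`. -/
def indexSet3 (k r s : ℕ) : Finset (Fin r → ℕ) :=
  (Finset.Nat.antidiagonalTuple r k).filter fun a =>
    (∀ i, 1 ≤ a i) ∧ (Finset.univ.filter fun i => 2 ≤ a i).card = s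

/-- `I(k,r)`: the set of indices of weight `k` and depth `r`. -/
def indexSet2 (k r : ℕ) : Finset (Fin r → ℕ) :=
  (Finset.Nat.antidiagonalTuple r k).filter fun a => ∀ i, 1 ≤ a i

/-- The one-variable finite q-multiple polylogarithm
`L_{k_1,…,k_r}^{(n)}(t;q) = Σ_{n > m_1 > … > m_r > 0} t^{m_1} / Π_i (1-q^{m_i})^{k_i}`,
with `L_∅(t) = 1`. -/
noncomputable def Lpoly (n : ℕ) {r : ℕ} (k : Fin r → ℕ) (q t : ℂ) : ℂ :=
  ∑ m ∈ msets n r,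
    ∏ i : Fin r, (if i.val = 0 then t ^ (m i : ℕ) else 1) / (1 - q ^ (m i : ℕ)) ^ (k i)

/-- The star version `L*_{k_1,…,k_r}^{(n)}(t;q)`, summed over `n > m_1 ≥ … ≥ m_r > 0`. -/
noncomputable def LpolyStar (n : ℕ) {r : ℕ} (k : Fin r → ℕ) (q t : ℂ) : ℂ :=
  ∑ m ∈ msetsStar n r,
    ∏ i : Fin r, (if i.val = 0 then t ^ (m i : ℕ) else 1) / (1 - q ^ (m i : ℕ)) ^ (k i)


lemma pascal1 (m k : ℕ) : (m+1).choose (k+1) = m.choose (k+1) + m.choose k :=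
  by rw [Nat.choose_succ_succ']; ring

lemma pascal2 (m k : ℕ) : (m+2).choose (k+2) =
    m.choose (k+2) + 2 * m.choose (k+1) + m.choose k := by
  rw [pascal1, pascal1, pascal1]; ring

lemma pascal3 (m k : ℕ) : (m+3).choose (k+3) =
    m.choose (k+3) + 3 * m.choose (k+2) + 3 * m.choose (k+1) + m.choose k := by
  rw [show m+3 = (m+1)+2 from rfl, pascal2, pascal1, pascal1, pascal1]; ring

lemma pascal4 (m k : ℕ) : (m+4).choose (k+4) =
    m.choose (k+4) + 4 * m.choose (k+3) + 6 * m.choose (k+2) + 4 * m.choose (k+1) + m.choose k := by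
  rw [show m+4 = (m+1)+3 from rfl, pascal3, pascal1, pascal1, pascal1, pascal1]; ring

lemma succ_mul_choose' (m k : ℕ) : (m+1) * m.choose k = (k+1) * (m+1).choose (k+1) := by
  have := Nat.add_one_mul_choose_eq m k
  rw [this, mul_comm]

noncomputable def Acoef (m r : ℕ) : ℂ :=
  2 * ((m + r + 1).choose (2 * r + 2) : ℂ) - ((m + r).choose (2 * r + 1) : ℂ)

lemma Acoef_eq_zero {m r : ℕ} (h : m ≤ r) : Acoef m r = 0 := by
  unfold Acoef
  rw [Nat.choose_eq_zero_of_lt (by omega), Nat.choose_eq_zero_of_lt (by omega)]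
  simp

lemma keyC_zero (n : ℕ) :
    Acoef (n+3) 0 = 3 * Acoef (n+2) 0 - 3 * Acoef (n+1) 0 + Acoef n 0 := by
  unfold Acoef
  simp only [Nat.cast_choose_two, Nat.choose_one_right, mul_zero, zero_add,
    Nat.mul_one, Nat.choose_one_right]
  push_cast
  ring

lemma keyC_succ (n r : ℕ) :
    Acoef (n+3) (r+1) = 3 * Acoef (n+2) (r+1) - 3 * Acoef (n+1) (r+1) + Acoef n (r+1)
      + Acoef (n+2) r - Acoef (n+1) r := by
  unfold Acoef
  simp only [show 2*(r+1)+2 = 2*r+4 from by ring,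
    show 2*(r+1)+1 = 2*r+3 from by ring,
    show n+3+(r+1)+1 = n+r+5 from by ring,
    show n+3+(r+1) = n+r+4 from by ring,
    show n+2+(r+1)+1 = n+r+4 from by ring,
    show n+2+(r+1) = n+r+3 from by ring,
    show n+1+(r+1)+1 = n+r+3 from by ring,
    show n+1+(r+1) = n+r+2 from by ring,
    show n+(r+1)+1 = n+r+2 from by ring,
    show n+(r+1) = n+r+1 from by ring,
    show n+2+r+1 = n+r+3 from by ring,
    show n+2+r = n+r+2 from by ring,
    show n+1+r+1 = n+r+2 from by ring,
    show n+1+r = n+r+1 from by ring]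
  have h54 : (n+r+5).choose (2*r+4) = (n+r+1).choose (2*r+4) + 4*(n+r+1).choose (2*r+3)
      + 6*(n+r+1).choose (2*r+2) + 4*(n+r+1).choose (2*r+1) + (n+r+1).choose (2*r) := by
    have := pascal4 (n+r+1) (2*r); rwa [show n+r+1+4 = n+r+5 from by ring] at this
  have h43 : (n+r+4).choose (2*r+3) = (n+r+1).choose (2*r+3) + 3*(n+r+1).choose (2*r+2)
      + 3*(n+r+1).choose (2*r+1) + (n+r+1).choose (2*r) := by
    have := pascal3 (n+r+1) (2*r); rwa [show n+r+1+3 = n+r+4 from by ring] at this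
  have h44 : (n+r+4).choose (2*r+4) = (n+r+1).choose (2*r+4) + 3*(n+r+1).choose (2*r+3)
      + 3*(n+r+1).choose (2*r+2) + (n+r+1).choose (2*r+1) := by
    have := pascal3 (n+r+1) (2*r+1)
    rwa [show n+r+1+3 = n+r+4 from by ring, show 2*r+1+3 = 2*r+4 from by ring,
      show 2*r+1+2 = 2*r+3 from by ring, show 2*r+1+1 = 2*r+2 from by ring] at this
  have h33 : (n+r+3).choose (2*r+3) = (n+r+1).choose (2*r+3) + 2*(n+r+1).choose (2*r+2)
      + (n+r+1).choose (2*r+1) := by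
    have := pascal2 (n+r+1) (2*r+1)
    rwa [show n+r+1+2 = n+r+3 from by ring, show 2*r+1+2 = 2*r+3 from by ring,
      show 2*r+1+1 = 2*r+2 from by ring] at this
  have h34 : (n+r+3).choose (2*r+4) = (n+r+1).choose (2*r+4) + 2*(n+r+1).choose (2*r+3)
      + (n+r+1).choose (2*r+2) := by
    have := pascal2 (n+r+1) (2*r+2)
    rwa [show n+r+1+2 = n+r+3 from by ring, show 2*r+2+2 = 2*r+4 from by ring,
      show 2*r+2+1 = 2*r+3 from by ring] at this
  have h23 : (n+r+2).choose (2*r+3) = (n+r+1).choose (2*r+3) + (n+r+1).choose (2*r+2) := by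
    have := pascal1 (n+r+1) (2*r+2)
    rwa [show n+r+1+1 = n+r+2 from by ring, show 2*r+2+1 = 2*r+3 from by ring] at this
  have h24 : (n+r+2).choose (2*r+4) = (n+r+1).choose (2*r+4) + (n+r+1).choose (2*r+3) := by
    have := pascal1 (n+r+1) (2*r+3)
    rwa [show n+r+1+1 = n+r+2 from by ring, show 2*r+3+1 = 2*r+4 from by ring] at this
  have h32 : (n+r+3).choose (2*r+2) = (n+r+1).choose (2*r+2) + 2*(n+r+1).choose (2*r+1)
      + (n+r+1).choose (2*r) := by
    have := pascal2 (n+r+1) (2*r)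
    rwa [show n+r+1+2 = n+r+3 from by ring] at this
  have h21 : (n+r+2).choose (2*r+1) = (n+r+1).choose (2*r+1) + (n+r+1).choose (2*r) := by
    have := pascal1 (n+r+1) (2*r)
    rwa [show n+r+1+1 = n+r+2 from by ring] at this
  have h22 : (n+r+2).choose (2*r+2) = (n+r+1).choose (2*r+2) + (n+r+1).choose (2*r+1) := by
    have := pascal1 (n+r+1) (2*r+1)
    rwa [show n+r+1+1 = n+r+2 from by ring, show 2*r+1+1 = 2*r+2 from by ring] at this
  simp only [h54, h43, h44, h33, h34, h23, h24, h32, h21, h22]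
  push_cast
  ring

lemma Acoef_one_zero : Acoef 1 0 = 1 := by
  unfold Acoef; norm_num

lemma Acoef_two_zero : Acoef 2 0 = 4 := by
  unfold Acoef
  norm_num [show (3).choose 2 = 3 from by decide, show (2).choose 1 = 2 from by decide]

lemma Acoef_two_one : Acoef 2 1 = 1 := by
  unfold Acoef
  norm_num [show (4).choose 4 = 1 from by decide, show (3).choose 3 = 1 from by decide]

lemma star_id (n : ℕ) (y : ℂ) :
    (∑ j ∈ range n, y ^ j) ^ 2
      = ∑ r ∈ range n, Acoef n r * (1 - y) ^ (2 * r) * y ^ (n - 1 - r) := by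
  induction n using Nat.strong_induction_on with
  | _ n IH =>
  match n, IH with
  | 0, _ => simp
  | 1, _ => simp [Acoef_one_zero]
  | 2, _ =>
    simp only [Finset.sum_range_succ, Finset.sum_range_zero, Acoef_two_zero, Acoef_two_one]
    norm_num
    ring
  | (n+3), IH =>
    have IH2 := IH (n+2) (by omega)
    have IH1 := IH (n+1) (by omega)
    have IH0 := IH n (by omega)
    -- the three-term recurrence for the right-hand side
    have key : ∑ ρ ∈ range (n+3), Acoef (n+3) ρ * (1-y)^(2*ρ) * y^(n+3-1-ρ)
        = (1+y+y^2) * (∑ r ∈ range (n+2), Acoef (n+2) r * (1-y)^(2*r) * y^(n+2-1-r))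
          - (1+y+y^2) * y * (∑ r ∈ range (n+1), Acoef (n+1) r * (1-y)^(2*r) * y^(n+1-1-r))
          + y^3 * (∑ r ∈ range n, Acoef n r * (1-y)^(2*r) * y^(n-1-r)) := by
      have E2 : (1+y+y^2) * (∑ r ∈ range (n+2), Acoef (n+2) r * (1-y)^(2*r) * y^(n+2-1-r))
          = (∑ ρ ∈ range (n+3), 3 * Acoef (n+2) ρ * (1-y)^(2*ρ) * y^(n+2-ρ))
            + ∑ ρ ∈ range (n+3),
              (if ρ = 0 then 0 else Acoef (n+2) (ρ-1) * (1-y)^(2*ρ) * y^(n+2-ρ)) := by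
        rw [mul_sum]
        have step : ∀ r ∈ range (n+2),
            (1+y+y^2) * (Acoef (n+2) r * (1-y)^(2*r) * y^(n+2-1-r))
              = 3 * Acoef (n+2) r * (1-y)^(2*r) * y^(n+2-r)
                + Acoef (n+2) r * (1-y)^(2*(r+1)) * y^(n+1-r) := by
          intro r hr
          rw [mem_range] at hr
          rw [show n+2-r = (n+1-r)+1 by omega, show n+2-1-r = n+1-r by omega,
            show 2*(r+1) = 2*r+2 by ring, pow_add, pow_succ]
          ring
        rw [Finset.sum_congr rfl step, Finset.sum_add_distrib]
        congr 1
        · apply Finset.sum_subset (by intro x hx; simp at hx ⊢; omega)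
          intro x hx hx2
          simp only [mem_range] at hx hx2
          rw [Acoef_eq_zero (by omega)]
          ring
        · conv_rhs => rw [Finset.sum_range_succ']
          simp only [Nat.add_sub_cancel, Nat.succ_ne_zero, if_false, if_true, reduceIte, add_zero]
          apply Finset.sum_congr rfl
          intro x hx
          rw [show n+2-(x+1) = n+1-x by omega]
      have E1 : (1+y+y^2) * y * (∑ r ∈ range (n+1), Acoef (n+1) r * (1-y)^(2*r) * y^(n+1-1-r))
          = (∑ ρ ∈ range (n+3), 3 * Acoef (n+1) ρ * (1-y)^(2*ρ) * y^(n+2-ρ))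
            + ∑ ρ ∈ range (n+3),
              (if ρ = 0 then 0 else Acoef (n+1) (ρ-1) * (1-y)^(2*ρ) * y^(n+2-ρ)) := by
        rw [mul_sum]
        have step : ∀ r ∈ range (n+1),
            (1+y+y^2) * y * (Acoef (n+1) r * (1-y)^(2*r) * y^(n+1-1-r))
              = 3 * Acoef (n+1) r * (1-y)^(2*r) * y^(n+2-r)
                + Acoef (n+1) r * (1-y)^(2*(r+1)) * y^(n+1-r) := by
          intro r hr
          rw [mem_range] at hr
          rw [show n+2-r = (n-r)+2 by omega, show n+1-1-r = n-r by omega,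
            show n+1-r = (n-r)+1 by omega, show 2*(r+1) = 2*r+2 by ring,
            pow_add, pow_add, pow_succ]
          ring
        rw [Finset.sum_congr rfl step, Finset.sum_add_distrib]
        congr 1
        · apply Finset.sum_subset (by intro x hx; simp at hx ⊢; omega)
          intro x hx hx2
          simp only [mem_range] at hx hx2
          rw [Acoef_eq_zero (by omega)]
          ring
        · conv_rhs => rw [Finset.sum_range_succ']
          simp only [Nat.add_sub_cancel, Nat.succ_ne_zero, if_false, if_true, reduceIte, add_zero]
          conv_rhs => rw [Finset.sum_range_succ]
          rw [Acoef_eq_zero (le_refl (n+1)), zero_mul, zero_mul, add_zero]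
          apply Finset.sum_congr rfl
          intro x hx
          rw [show n+2-(x+1) = n+1-x by omega]
      have E0 : y^3 * (∑ r ∈ range n, Acoef n r * (1-y)^(2*r) * y^(n-1-r))
          = ∑ ρ ∈ range (n+3), Acoef n ρ * (1-y)^(2*ρ) * y^(n+2-ρ) := by
        rw [mul_sum]
        have step : ∀ r ∈ range n,
            y^3 * (Acoef n r * (1-y)^(2*r) * y^(n-1-r))
              = Acoef n r * (1-y)^(2*r) * y^(n+2-r) := by
          intro r hr
          rw [mem_range] at hr
          rw [show n+2-r = (n-1-r)+3 by omega, pow_add]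
          ring
        rw [Finset.sum_congr rfl step]
        apply Finset.sum_subset (by intro x hx; simp at hx ⊢; omega)
        intro x hx hx2
        simp only [mem_range] at hx hx2
        rw [Acoef_eq_zero (by omega)]
        ring
      rw [E2, E1, E0]
      rw [show ∀ a b c d e : ℂ, (a + b) - (c + d) + e = (a - c + e) + (b - d) from by intros; ring]
      rw [← Finset.sum_sub_distrib, ← Finset.sum_add_distrib, ← Finset.sum_sub_distrib,
        ← Finset.sum_add_distrib]
      apply Finset.sum_congr rfl
      intro ρ hρ
      match ρ with
      | 0 =>
        simp only [reduceIte, if_true, Nat.sub_zero, show n+3-1 = n+2 by omega]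
        rw [keyC_zero n]; ring
      | (r+1) =>
        simp only [Nat.succ_ne_zero, if_false, reduceIte, Nat.add_sub_cancel,
          show n+3-1-(r+1) = n+2-(r+1) by omega]
        rw [keyC_succ n r]
        ring
    rw [key, ← IH2, ← IH1, ← IH0]
    rw [Finset.sum_range_succ, Finset.sum_range_succ, Finset.sum_range_succ,
      show n+2 = n+1+1 from rfl, show n+1 = n+1 from rfl]
    rw [show (y:ℂ)^(n+2) = y^n*y*y by rw [pow_add]; ring,
        show (y:ℂ)^(n+1) = y^n*y by rw [pow_add]; ring]
    ring

lemma coeff_prod_linear (s : Finset ℕ) (c : ℕ → ℂ) (k : ℕ) :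
    (∏ i ∈ s, (C (c i) * X + 1)).coeff k
      = ∑ t ∈ s.powersetCard k, ∏ i ∈ t, c i := by
  rw [Finset.prod_add]
  have h1 : ∀ t ∈ s.powerset,
      ((∏ i ∈ t, (C (c i) * X)) * ∏ _i ∈ s \ t, (1:ℂ[X]))
        = C (∏ i ∈ t, c i) * X ^ t.card := by
    intro t _
    rw [Finset.prod_const_one, mul_one, Finset.prod_mul_distrib, Finset.prod_const,
      map_prod]
  rw [Finset.sum_congr rfl h1, Polynomial.finset_sum_coeff]
  have h2 : ∀ t ∈ s.powerset, (C (∏ i ∈ t, c i) * X ^ t.card).coeff k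
      = if t.card = k then ∏ i ∈ t, c i else 0 := by
    intro t _
    rw [Polynomial.coeff_C_mul, Polynomial.coeff_X_pow]
    split <;> rename_i h
    · rw [if_pos h.symm, mul_one]
    · rw [if_neg (fun hh => h hh.symm), mul_zero]
  rw [Finset.sum_congr rfl h2, Finset.sum_ite, Finset.sum_const_zero, add_zero,
    Finset.powersetCard_eq_filter]

lemma msets_sum_eq (n r : ℕ) (c : ℕ → ℂ) :
    ∑ m ∈ msets n r, ∏ i : Fin r, c (m i : ℕ)
      = ∑ t ∈ (Finset.Ico 1 n).powersetCard r, ∏ x ∈ t, c x := by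
  have inj : ∀ (m : Fin r → Fin n), (∀ i j : Fin r, i < j → m j < m i) →
      Function.Injective (fun i : Fin r => ((m i : ℕ))) := by
    intro m hm a b hab
    by_contra hne
    rcases lt_or_gt_of_ne hne with h | h
    · exact absurd hab (Nat.ne_of_gt (hm a b h))
    · exact absurd hab (Nat.ne_of_lt (hm b a h))
  have key : ∀ (m : Fin r → Fin n), (∀ i j : Fin r, i < j → m j < m i) →
      StrictMono (fun i : Fin r => ((m i.rev : ℕ))) := by
    intro m hm i j hij
    exact hm j.rev i.rev (Fin.rev_lt_rev.2 hij)
  apply Finset.sum_bij (fun (m : Fin r → Fin n) _ => Finset.image (fun i => (m i : ℕ)) Finset.univ)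
  · -- membership
    intro m hm
    rw [msets, Finset.mem_filter] at hm
    obtain ⟨-, hanti, hpos⟩ := hm
    rw [Finset.mem_powersetCard]
    constructor
    · intro x hx
      rw [Finset.mem_image] at hx
      obtain ⟨i, -, rfl⟩ := hx
      exact Finset.mem_Ico.2 ⟨hpos i, (m i).isLt⟩
    · rw [Finset.card_image_of_injective _ (inj m hanti), Finset.card_univ, Fintype.card_fin]
  · -- injectivity
    intro m₁ hm₁ m₂ hm₂ himg
    rw [msets, Finset.mem_filter] at hm₁ hm₂
    obtain ⟨-, h₁, p₁⟩ := hm₁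
    obtain ⟨-, h₂, p₂⟩ := hm₂
    have hcard₁ : (Finset.image (fun i : Fin r => ((m₁ i : ℕ))) Finset.univ).card = r := by
      rw [Finset.card_image_of_injective _ (inj m₁ h₁), Finset.card_univ, Fintype.card_fin]
    have e₁ : (fun i : Fin r => ((m₁ i.rev : ℕ)))
        = Finset.orderEmbOfFin _ hcard₁ :=
      Finset.orderEmbOfFin_unique hcard₁
        (fun x => Finset.mem_image.2 ⟨x.rev, Finset.mem_univ _, rfl⟩) (key m₁ h₁)
    have e₂ : (fun i : Fin r => ((m₂ i.rev : ℕ)))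
        = Finset.orderEmbOfFin _ hcard₁ :=
      Finset.orderEmbOfFin_unique hcard₁
        (fun x => himg ▸ Finset.mem_image.2 ⟨x.rev, Finset.mem_univ _, rfl⟩) (key m₂ h₂)
    funext i
    have := congrFun (e₁.trans e₂.symm) i.rev
    simp only [Fin.rev_rev] at this
    exact Fin.ext this
  · -- surjectivity
    intro t ht
    rw [Finset.mem_powersetCard] at ht
    obtain ⟨hsub, hcard⟩ := ht
    have hmem : ∀ i : Fin r, t.orderEmbOfFin hcard i ∈ Finset.Ico 1 n :=
      fun i => hsub (Finset.orderEmbOfFin_mem t hcard i)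
    refine ⟨fun i => ⟨t.orderEmbOfFin hcard i.rev, (Finset.mem_Ico.1 (hmem i.rev)).2⟩, ?_, ?_⟩
    · rw [msets, Finset.mem_filter]
      refine ⟨Finset.mem_univ _, fun i j hij => ?_, fun i => (Finset.mem_Ico.1 (hmem i.rev)).1⟩
      exact (Finset.orderEmbOfFin t hcard).strictMono (Fin.rev_lt_rev.2 hij)
    · apply Finset.coe_injective
      rw [Finset.coe_image, Finset.coe_univ, Set.image_univ]
      have : (Set.range fun i : Fin r => (t.orderEmbOfFin hcard i.rev : ℕ))
          = Set.range fun i : Fin r => (t.orderEmbOfFin hcard i : ℕ) :=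
        Fin.rev_surjective.range_comp _
      rw [this]
      exact t.range_orderEmbOfFin hcard
  · -- values
    intro m hm
    rw [msets, Finset.mem_filter] at hm
    obtain ⟨-, hanti, -⟩ := hm
    rw [Finset.prod_image (fun a _ b _ hab => inj m hanti hab)]

variable {n : ℕ} {ζ : ℂ}

lemma prod_X_sub_zeta (hn : 0 < n) (hζ : IsPrimitiveRoot ζ n) :
    ∏ i ∈ range n, (X - C (ζ ^ i)) = X ^ n - 1 := by
  have hmonic : ((X:ℂ[X]) ^ n - C 1).Monic := monic_X_pow_sub_C (1 : ℂ) hn.ne'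
  have hcard : Multiset.card ((X ^ n - C (1:ℂ)).roots) = ((X:ℂ[X]) ^ n - C 1).natDegree := by
    rw [natDegree_X_pow_sub_C, ← nthRoots]
    exact hζ.card_nthRoots_one
  have h1 := prod_multiset_X_sub_C_of_monic_of_roots_card_eq hmonic hcard
  have h2 : ((X:ℂ[X]) ^ n - C 1).roots = nthRoots n 1 := rfl
  rw [h2, hζ.nthRoots_eq (one_pow n), Multiset.map_map] at h1
  rw [show (1:ℂ[X]) = C 1 from (map_one C).symm, ← h1,
    Finset.prod_eq_multiset_prod, Finset.range_val]
  apply congrArg Multiset.prod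
  apply Multiset.map_congr rfl
  intro i _
  simp [Function.comp]

lemma geom_poly (hn : 0 < n) (hζ : IsPrimitiveRoot ζ n) :
    ∏ i ∈ Ico 1 n, (X - C (ζ ^ i)) = ∑ j ∈ range n, (X:ℂ[X]) ^ j := by
  have h1 := prod_X_sub_zeta hn hζ
  rw [Finset.range_eq_Ico, Finset.prod_eq_prod_Ico_succ_bot hn] at h1
  have h2 : ((X:ℂ[X]) - 1) * ∑ j ∈ range n, (X:ℂ[X]) ^ j = X ^ n - 1 := by
    rw [mul_comm]; exact geom_sum_mul X n
  apply mul_left_cancel₀ (a := (X:ℂ[X]) - C 1) (X_sub_C_ne_zero 1)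
  rw [show ((X:ℂ[X]) - C 1) * ∑ j ∈ range n, (X:ℂ[X]) ^ j
      = ((X:ℂ[X]) - 1) * ∑ j ∈ range n, (X:ℂ[X]) ^ j from by rw [map_one], h2, ← h1]
  norm_num

lemma geom_eval (hn : 0 < n) (hζ : IsPrimitiveRoot ζ n) (x : ℂ) :
    ∏ i ∈ Ico 1 n, (x - ζ ^ i) = ∑ j ∈ range n, x ^ j := by
  have := congrArg (eval x) (geom_poly hn hζ)
  simpa [eval_prod, eval_finset_sum] using this

lemma prod_one_sub_zeta (hn : 0 < n) (hζ : IsPrimitiveRoot ζ n) :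
    ∏ i ∈ Ico 1 n, (1 - ζ ^ i) = (n : ℂ) := by
  simpa using geom_eval hn hζ 1

noncomputable def cc (ζ : ℂ) (i : ℕ) : ℂ := ζ ^ i / (1 - ζ ^ i) ^ 2


lemma PeqQ (hn : 0 < n) (hζ : IsPrimitiveRoot ζ n) :
    (∏ i ∈ Ico 1 n, (C (cc ζ i) * X + 1))
      = ∑ r ∈ range n, C ((-1)^r * Acoef n r / (n:ℂ)^2) * X^r := by
  have hζ1 : ∀ i ∈ Ico 1 n, (1:ℂ) - ζ^i ≠ 0 := by
    intro i hi
    rw [mem_Ico] at hi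
    exact sub_ne_zero.2 (Ne.symm (hζ.pow_ne_one_of_pos_of_lt (Nat.one_le_iff_ne_zero.mp hi.1) hi.2))
  have hn0 : ((n:ℂ)) ≠ 0 := Nat.cast_ne_zero.2 hn.ne'
  apply eq_of_infinite_eval_eq
  apply Set.Infinite.mono ?_ ((Set.finite_singleton (0:ℂ)).infinite_compl)
  intro T hT
  rw [Set.mem_compl_singleton_iff] at hT
  simp only [Set.mem_setOf_eq]
  -- find y with y^2 + (T-2)y + 1 = 0
  obtain ⟨y, hy⟩ : ∃ y : ℂ, y^2 + (T-2)*y + 1 = 0 := by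
    obtain ⟨y, hy⟩ := Complex.isAlgClosed.exists_root
      (C 1 * X^2 + C (T-2) * X + C 1) (by rw [Polynomial.degree_quadratic one_ne_zero]; decide)
    refine ⟨y, ?_⟩
    have := hy
    simp only [IsRoot, eval_add, eval_mul, eval_pow, eval_C, eval_X, one_mul] at this
    exact this
  have hy0 : y ≠ 0 := by
    intro h
    rw [h] at hy
    simp at hy
  have hyinv : y * y⁻¹ = 1 := mul_inv_cancel₀ hy0
  have hsum : y + y⁻¹ = 2 - T := by
    field_simp
    linear_combination hy
  have hTy : -T = (1 - y)^2 * y⁻¹ := by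
    field_simp
    linear_combination -hy
  -- per-factor identity
  have factor : ∀ i ∈ Ico 1 n, ((1:ℂ) - ζ^i)^2 * (cc ζ i * T + 1)
      = (1 - ζ^i*y) * (1 - ζ^i*y⁻¹) := by
    intro i hi
    have h1 := hζ1 i hi
    calc ((1:ℂ) - ζ^i)^2 * (cc ζ i * T + 1) = ζ^i*T + (1-ζ^i)^2 := by
          rw [cc]; field_simp
    _ = 1 - ζ^i*(y+y⁻¹) + ζ^i*ζ^i*(y*y⁻¹) := by rw [hsum, hyinv]; ring
    _ = (1 - ζ^i*y) * (1 - ζ^i*y⁻¹) := by ring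
  have prodA : ∀ w : ℂ, w ≠ 0 →
      ∏ i ∈ Ico 1 n, (1 - ζ^i * w) = w^(n-1) * ∑ j ∈ range n, (w⁻¹)^j := by
    intro w hw
    calc ∏ i ∈ Ico 1 n, (1 - ζ^i * w) = ∏ i ∈ Ico 1 n, (w * (w⁻¹ - ζ^i)) := by
          apply Finset.prod_congr rfl
          intro i _
          field_simp
    _ = w^(n-1) * ∏ i ∈ Ico 1 n, (w⁻¹ - ζ^i) := by
          rw [Finset.prod_mul_distrib, Finset.prod_const, Nat.card_Ico]
    _ = w^(n-1) * ∑ j ∈ range n, (w⁻¹)^j := by rw [geom_eval hn hζ]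
  have hy1 : y⁻¹ ≠ 0 := inv_ne_zero hy0
  -- the left side
  have lhs_eq : (n:ℂ)^2 * eval T (∏ i ∈ Ico 1 n, (C (cc ζ i) * X + 1))
      = ∑ r ∈ range n, Acoef n r * (1-y)^(2*r) * (y⁻¹)^r := by
    rw [eval_prod]
    simp only [eval_add, eval_mul, eval_C, eval_X, eval_one]
    calc (n:ℂ)^2 * ∏ i ∈ Ico 1 n, (cc ζ i * T + 1)
        = (∏ i ∈ Ico 1 n, ((1:ℂ) - ζ^i))^2 * ∏ i ∈ Ico 1 n, (cc ζ i * T + 1) := by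
          rw [prod_one_sub_zeta hn hζ]
    _ = ∏ i ∈ Ico 1 n, (((1:ℂ) - ζ^i)^2 * (cc ζ i * T + 1)) := by
          rw [← Finset.prod_pow, ← Finset.prod_mul_distrib]
    _ = ∏ i ∈ Ico 1 n, ((1 - ζ^i*y) * (1 - ζ^i*y⁻¹)) := Finset.prod_congr rfl factor
    _ = (∏ i ∈ Ico 1 n, (1 - ζ^i*y)) * ∏ i ∈ Ico 1 n, (1 - ζ^i*y⁻¹) :=
          Finset.prod_mul_distrib
    _ = (y^(n-1) * ∑ j ∈ range n, (y⁻¹)^j) * ((y⁻¹)^(n-1) * ∑ j ∈ range n, y^j) := by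
          rw [prodA y hy0, prodA y⁻¹ hy1, inv_inv]
    _ = (∑ j ∈ range n, y^j)^2 * (y⁻¹)^(n-1) := by
          have hS : ∑ j ∈ range n, (y⁻¹)^j = (y⁻¹)^(n-1) * ∑ j ∈ range n, y^j := by
            rw [← Finset.sum_range_reflect (fun j => (y⁻¹)^j) n]
            rw [Finset.mul_sum]
            apply Finset.sum_congr rfl
            intro j hj
            rw [mem_range] at hj
            have hsplit : (y⁻¹)^(n-1) = (y⁻¹)^(n-1-j) * (y⁻¹)^j := by
              rw [← pow_add]; congr 1; omega
            rw [hsplit, mul_assoc, ← mul_pow, inv_mul_cancel₀ hy0, one_pow, mul_one]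
          rw [hS]
          have : (y^(n-1) * (y⁻¹)^(n-1)) = 1 := by
            rw [← mul_pow, hyinv, one_pow]
          calc (y^(n-1) * ((y⁻¹)^(n-1) * ∑ j ∈ range n, y^j))
              * ((y⁻¹)^(n-1) * ∑ j ∈ range n, y^j)
              = (y^(n-1) * (y⁻¹)^(n-1)) * ((∑ j ∈ range n, y^j)^2 * (y⁻¹)^(n-1)) := by ring
          _ = (∑ j ∈ range n, y^j)^2 * (y⁻¹)^(n-1) := by rw [this, one_mul]
    _ = (∑ r ∈ range n, Acoef n r * (1-y)^(2*r) * y^(n-1-r)) * (y⁻¹)^(n-1) := by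
          rw [star_id]
    _ = ∑ r ∈ range n, Acoef n r * (1-y)^(2*r) * (y⁻¹)^r := by
          rw [Finset.sum_mul]
          apply Finset.sum_congr rfl
          intro j hj
          rw [mem_range] at hj
          have hsplit : (y⁻¹)^(n-1) = (y⁻¹)^(n-1-j) * (y⁻¹)^j := by
            rw [← pow_add]; congr 1; omega
          have hpt : y^(n-1-j) * (y⁻¹)^(n-1) = (y⁻¹)^j := by
            rw [hsplit, ← mul_assoc, ← mul_pow, hyinv, one_pow, one_mul]
          calc Acoef n j * (1-y)^(2*j) * y^(n-1-j) * (y⁻¹)^(n-1)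
              = Acoef n j * (1-y)^(2*j) * (y^(n-1-j) * (y⁻¹)^(n-1)) := by ring
          _ = Acoef n j * (1-y)^(2*j) * (y⁻¹)^j := by rw [hpt]
  -- the right side
  have rhs_eq : (n:ℂ)^2 * eval T (∑ r ∈ range n, C ((-1)^r * Acoef n r / (n:ℂ)^2) * X^r)
      = ∑ r ∈ range n, Acoef n r * (1-y)^(2*r) * (y⁻¹)^r := by
    rw [eval_finset_sum]
    simp only [eval_mul, eval_pow, eval_C, eval_X]
    rw [Finset.mul_sum]
    apply Finset.sum_congr rfl
    intro j _
    have hn2 : ((n:ℂ))^2 ≠ 0 := pow_ne_zero 2 hn0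
    have step1 : (n:ℂ)^2 * ((-1)^j * Acoef n j / (n:ℂ)^2 * T^j)
        = Acoef n j * ((-T)^j) := by
      rw [neg_pow]
      field_simp
      ring
    rw [step1, hTy, mul_pow, ← pow_mul]
    ring
  have := lhs_eq.trans rhs_eq.symm
  exact mul_left_cancel₀ (pow_ne_zero 2 hn0) this

lemma coeffQ (r : ℕ) (hr : r < n) :
    (∑ ρ ∈ range n, C ((-1)^ρ * Acoef n ρ / (n:ℂ)^2) * X^ρ).coeff r
      = (-1)^r * Acoef n r / (n:ℂ)^2 := by
  rw [Polynomial.finset_sum_coeff]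
  have h : ∀ ρ ∈ range n, (C ((-1)^ρ * Acoef n ρ / (n:ℂ)^2) * X^ρ).coeff r
      = if ρ = r then (-1)^ρ * Acoef n ρ / (n:ℂ)^2 else 0 := by
    intro ρ _
    rw [Polynomial.coeff_C_mul, Polynomial.coeff_X_pow]
    split <;> rename_i hh
    · rw [if_pos hh.symm, mul_one]
    · rw [if_neg (fun hhh => hh hhh.symm), mul_zero]
  rw [Finset.sum_congr rfl h, Finset.sum_ite_eq' (range n) r]
  exact if_pos (mem_range.2 hr)

/-- `z_n({2}^r; ζ_n) = ((-1)^r/(n(r+1)))·C(n+r, 2r+1)·(1-ζ_n)^{2r}`. -/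
theorem zn_twos_eval (n : ℕ) (hn : 0 < n) (ζ : ℂ) (hζ : IsPrimitiveRoot ζ n)
    (r : ℕ) (hr : 1 ≤ r) :
    z n (fun _ : Fin r => 2) ζ =
      ((-1 : ℂ) ^ r / ((n : ℂ) * ((r : ℂ) + 1))) * ((n + r).choose (2 * r + 1) : ℂ) *
        (1 - ζ) ^ (2 * r) := by
  have inj : ∀ (m : Fin r → Fin n), (∀ i j : Fin r, i < j → m j < m i) →
      Function.Injective (fun i : Fin r => ((m i : ℕ))) := by
    intro m hm a b hab
    by_contra hne
    rcases lt_or_gt_of_ne hne with h | h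
    · exact absurd hab (Nat.ne_of_gt (hm a b h))
    · exact absurd hab (Nat.ne_of_lt (hm b a h))
  rcases lt_or_ge r n with hrn | hrn
  · -- case r < n
    have hn0 : ((n:ℂ)) ≠ 0 := Nat.cast_ne_zero.2 hn.ne'
    have hζ1 : ∀ i ∈ Ico 1 n, (1:ℂ) - ζ^i ≠ 0 := by
      intro i hi
      rw [mem_Ico] at hi
      exact sub_ne_zero.2 (Ne.symm (hζ.pow_ne_one_of_pos_of_lt (Nat.one_le_iff_ne_zero.mp hi.1) hi.2))
    have hOne : (1:ℂ) - ζ ≠ 0 := by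
      have := hζ1 1 (mem_Ico.2 ⟨le_refl 1, by omega⟩)
      rwa [pow_one] at this
    -- rewrite z as (1-ζ)^(2r) * sum of products of cc
    have hz : z n (fun _ : Fin r => 2) ζ
        = (1-ζ)^(2*r) * ∑ m ∈ msets n r, ∏ i : Fin r, cc ζ (m i : ℕ) := by
      rw [z, Finset.mul_sum]
      apply Finset.sum_congr rfl
      intro m hm
      rw [msets, Finset.mem_filter] at hm
      obtain ⟨-, -, hpos⟩ := hm
      have hfac : ∀ i : Fin r, ζ ^ ((2 - 1) * ((m i : ℕ)))
          / ((1 - ζ ^ ((m i : ℕ))) / (1 - ζ)) ^ 2 = (1-ζ)^2 * cc ζ (m i : ℕ) := by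
        intro i
        have hne := hζ1 ((m i : ℕ)) (mem_Ico.2 ⟨hpos i, (m i).isLt⟩)
        rw [show (2-1) * ((m i : ℕ)) = (m i : ℕ) from by norm_num, cc]
        field_simp
      calc (∏ i : Fin r, ζ ^ ((2 - 1) * ((m i : ℕ)))
            / ((1 - ζ ^ ((m i : ℕ))) / (1 - ζ)) ^ 2)
          = ∏ i : Fin r, ((1-ζ)^2 * cc ζ (m i : ℕ)) := Finset.prod_congr rfl fun i _ => hfac i
      _ = ((1-ζ)^2)^(Finset.univ : Finset (Fin r)).card * ∏ i : Fin r, cc ζ (m i : ℕ) := by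
          rw [Finset.prod_mul_distrib, Finset.prod_const]
      _ = (1-ζ)^(2*r) * ∏ i : Fin r, cc ζ (m i : ℕ) := by
          rw [Finset.card_univ, Fintype.card_fin, ← pow_mul]
    rw [hz, msets_sum_eq n r (cc ζ), ← coeff_prod_linear (Finset.Ico 1 n) (cc ζ) r,
      PeqQ hn hζ, coeffQ r hrn]
    -- final arithmetic
    have hchoose : ((n+r+1 : ℕ) : ℂ) * ((n+r).choose (2*r+1) : ℂ)
        = ((2*r+2 : ℕ) : ℂ) * (((n+r+1).choose (2*r+2) : ℕ) : ℂ) := by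
      have h := succ_mul_choose' (n+r) (2*r+1)
      rw [show 2*r+1+1 = 2*r+2 from by ring] at h
      exact_mod_cast congrArg (Nat.cast : ℕ → ℂ) h
    have hA : Acoef n r * ((r:ℂ)+1) = (n:ℂ) * ((n+r).choose (2*r+1) : ℂ) := by
      unfold Acoef
      push_cast at hchoose ⊢
      linear_combination -hchoose
    have hr1 : ((r:ℂ)+1) ≠ 0 := by
      intro h
      have : ((r:ℂ)+1) = ((r+1 : ℕ) : ℂ) := by push_cast; ring
      rw [this, Nat.cast_eq_zero] at h
      omega
    field_simp
    linear_combination hA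
  · -- case n ≤ r : both sides vanish
    have hempty : msets n r = ∅ := by
      rw [Finset.eq_empty_iff_forall_notMem]
      intro m hm
      rw [msets, Finset.mem_filter] at hm
      obtain ⟨-, hanti, hpos⟩ := hm
      have hsub : Finset.image (fun i : Fin r => ((m i : ℕ))) Finset.univ ⊆ Finset.Ico 1 n := by
        intro x hx
        rw [Finset.mem_image] at hx
        obtain ⟨i, -, rfl⟩ := hx
        exact Finset.mem_Ico.2 ⟨hpos i, (m i).isLt⟩
      have hcard := Finset.card_le_card hsub
      rw [Finset.card_image_of_injective _ (inj m hanti), Finset.card_univ,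
        Fintype.card_fin, Nat.card_Ico] at hcard
      omega
    rw [z, hempty, Finset.sum_empty]
    rw [Nat.choose_eq_zero_of_lt (by omega)]
    simp
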